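/- Given a directed graph G and four distinct vertices x, y, w, z, there exist vertex-disjoint paths x⇝y and w⇝z in G if and only if the edge e = y→w is irredundant in the net (G', x, z), where G' is G augmented (if necessary) with the edge e. -/

import Mathlib

/-- A directed multigraph: a type of vertices, a type of edges,
and source/target maps. -/
structure MultiDigraph (V E : Type) where
  src : E → V
  tgt : E → V

namespace MultiDigraph

variable {V E : Type}

/-- `G.IsWalk u p v` : the list of edges `p` forms a walk from `u` to `v`. -/
def IsWalk (G : MultiDigraph V E) : V → List E → V → Prop
  | u, [], v => u = v
  | u, e :: p, v => G.src e = u ∧ IsWalk G (G.tgt e) p v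

/-- The list of vertices visited by a walk starting at `u` with edges `p`. -/
def walkVerts (G : MultiDigraph V E) : V → List E → List V
  | u, [] => [u]
  | u, e :: p => u :: walkVerts G (G.tgt e) p

/-- A simple path: a walk repeating no vertex. -/
def IsSimplePath (G : MultiDigraph V E) (u : V) (p : List E) (v : V) : Prop :=
  G.IsWalk u p v ∧ (G.walkVerts u p).Nodup

/-- The set of simple `st`-paths using only edges from `F`. -/
def SP (G : MultiDigraph V E) (F : Set E) (s t : V) : Set (List E) :=
  {p | G.IsSimplePath s p t ∧ ∀ e ∈ p, e ∈ F}

/-- An edge is irredundant if it lies on some simple `st`-path. -/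
def EdgeIrredundant (G : MultiDigraph V E) (s t : V) (e : E) : Prop :=
  ∃ p, G.IsSimplePath s p t ∧ e ∈ p

/-- A vertex is irredundant if it lies on some simple `st`-path. -/
def VertexIrredundant (G : MultiDigraph V E) (s t : V) (x : V) : Prop :=
  ∃ p, G.IsSimplePath s p t ∧ x ∈ G.walkVerts s p

/-- A net is `st`-connected if every vertex lies on some `st`-path. -/
def STConnected (G : MultiDigraph V E) (s t : V) : Prop :=
  ∀ x : V, ∃ p, G.IsWalk s p t ∧ x ∈ G.walkVerts s p

end MultiDigraph

namespace MultiDigraph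

/-- `G` augmented with one extra edge from `y` to `w`. -/
def addEdge {V E : Type} (G : MultiDigraph V E) (y w : V) :
    MultiDigraph V (E ⊕ Unit) :=
  ⟨Sum.elim G.src fun _ => y, Sum.elim G.tgt fun _ => w⟩

end MultiDigraph

namespace MultiDigraph

variable {V E : Type}

@[simp] lemma isWalk_nil (G : MultiDigraph V E) {u v : V} :
    G.IsWalk u [] v ↔ u = v := Iff.rfl

@[simp] lemma isWalk_cons (G : MultiDigraph V E) {u v : V} {e : E} {p : List E} :
    G.IsWalk u (e :: p) v ↔ G.src e = u ∧ G.IsWalk (G.tgt e) p v := Iff.rfl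

@[simp] lemma walkVerts_nil (G : MultiDigraph V E) (u : V) :
    G.walkVerts u [] = [u] := rfl

@[simp] lemma walkVerts_cons (G : MultiDigraph V E) (u : V) (e : E) (p : List E) :
    G.walkVerts u (e :: p) = u :: G.walkVerts (G.tgt e) p := rfl

lemma walkVerts_ne_nil (G : MultiDigraph V E) : ∀ (u : V) (p : List E),
    G.walkVerts u p ≠ []
  | _, [] => by simp
  | _, e :: p => by simp

lemma isWalk_append (G : MultiDigraph V E) : ∀ (p : List E) {q : List E} {u v : V},
    G.IsWalk u (p ++ q) v ↔ ∃ m, G.IsWalk u p m ∧ G.IsWalk m q v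
  | [], q, u, v => by
      simp only [List.nil_append, isWalk_nil]
      constructor
      · exact fun h => ⟨u, rfl, h⟩
      · rintro ⟨m, rfl, h⟩; exact h
  | e :: p, q, u, v => by
      simp only [List.cons_append, isWalk_cons, isWalk_append G p]
      tauto

lemma walkVerts_append (G : MultiDigraph V E) : ∀ (p : List E) {u v : V} (q : List E),
    G.IsWalk u p v →
    G.walkVerts u (p ++ q) = (G.walkVerts u p).dropLast ++ G.walkVerts v q
  | [], u, v, q, h => by subst h; simp
  | e :: p, u, v, q, h => by
      obtain ⟨he, hw⟩ := h
      have := walkVerts_append G p q hw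
      simp only [List.cons_append, walkVerts_cons, this]
      rw [List.dropLast_cons_of_ne_nil (G.walkVerts_ne_nil _ p)]
      simp

lemma walkVerts_eq (G : MultiDigraph V E) {p : List E} {u v : V} (h : G.IsWalk u p v) :
    G.walkVerts u p = (G.walkVerts u p).dropLast ++ [v] := by
  have := G.walkVerts_append p [] h
  simpa using this

lemma end_mem_walkVerts (G : MultiDigraph V E) {p : List E} {u v : V}
    (h : G.IsWalk u p v) : v ∈ G.walkVerts u p := by
  rw [G.walkVerts_eq h]; simp

lemma src_mem_walkVerts (G : MultiDigraph V E) : ∀ (p : List E) {u v : V} {e : E},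
    G.IsWalk u p v → e ∈ p → G.src e ∈ G.walkVerts u p
  | [], u, v, e, h, he => by simp at he
  | e' :: p, u, v, e, h, he => by
      obtain ⟨h1, h2⟩ := h
      rcases (by simpa using he : e = e' ∨ e ∈ p) with rfl | he'
      · simp [h1]
      · simp [src_mem_walkVerts G p h2 he']

/-- suffix of a walk from a visited vertex -/
lemma walk_suffix (G : MultiDigraph V E) : ∀ (p : List E) {u v a : V},
    G.IsWalk u p v → a ∈ G.walkVerts u p →
    ∃ q, q.length ≤ p.length ∧ G.IsWalk a q v ∧
      (∀ b ∈ G.walkVerts a q, b ∈ G.walkVerts u p) ∧ (∀ e ∈ q, e ∈ p)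
  | [], u, v, a, h, ha => by
      simp at ha h
      subst ha h
      exact ⟨[], by simp, rfl, by simp, by simp⟩
  | e :: p, u, v, a, h, ha => by
      obtain ⟨he, hw⟩ := h
      rcases (by simpa using ha : a = u ∨ a ∈ G.walkVerts (G.tgt e) p) with rfl | ha'
      · exact ⟨e :: p, le_rfl, ⟨he, hw⟩, fun b hb => hb, fun e' h' => h'⟩
      · obtain ⟨q, hl, hq, hv, hm⟩ := walk_suffix G p hw ha'
        exact ⟨q, hl.trans (by simp), hq, fun b hb => by simp [hv b hb],
          fun e' h' => by simp [hm e' h']⟩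

/-- extract a simple path from a walk -/
lemma exists_simplePath (G : MultiDigraph V E) : ∀ (n : ℕ) (p : List E), p.length ≤ n →
    ∀ {u v : V}, G.IsWalk u p v →
    ∃ q, G.IsSimplePath u q v ∧
      (∀ b ∈ G.walkVerts u q, b ∈ G.walkVerts u p) ∧ (∀ e ∈ q, e ∈ p)
  | n, [], _, u, v, h => by
      subst h
      exact ⟨[], ⟨rfl, by simp⟩, by simp, by simp⟩
  | 0, e :: p, hn, u, v, h => by simp at hn
  | n + 1, e :: p, hn, u, v, h => by
      obtain ⟨he, hw⟩ := h
      have hn' : p.length ≤ n := by simpa using hn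
      by_cases hu : u ∈ G.walkVerts (G.tgt e) p
      · obtain ⟨q, hl, hq, hv, hm⟩ := G.walk_suffix p hw hu
        obtain ⟨r, hr, hrv, hrm⟩ := exists_simplePath G n q (hl.trans hn') hq
        exact ⟨r, hr, fun b hb => by simp [hv b (hrv b hb)],
          fun e' h' => by simp [hm e' (hrm e' h')]⟩
      · obtain ⟨r, ⟨hrw, hrn⟩, hrv, hrm⟩ := exists_simplePath G n p hn' hw
        refine ⟨e :: r, ⟨⟨he, hrw⟩, ?_⟩, ?_, ?_⟩
        · simp only [walkVerts_cons, List.nodup_cons]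
          exact ⟨fun hmem => hu (hrv u hmem), hrn⟩
        · intro b hb
          rcases (by simpa using hb : b = u ∨ b ∈ G.walkVerts (G.tgt e) r) with rfl | hb'
          · simp
          · simp [hrv b hb']
        · intro e' h'
          rcases (by simpa using h' : e' = e ∨ e' ∈ r) with rfl | h''
          · simp
          · simp [hrm e' h'']

lemma first_split {α : Type} {a : α} : ∀ {l : List α}, a ∈ l →
    ∃ s t, l = s ++ a :: t ∧ a ∉ s := by
  intro l
  induction l with
  | nil => simp
  | cons b l ih =>
      intro h
      by_cases hb : b = a
      · exact ⟨[], l, by simp [hb], by simp⟩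
      · obtain ⟨s, t, rfl, hs⟩ := ih (by
          rcases (by simpa using h) with rfl | h'
          · exact absurd rfl hb
          · exact h')
        exact ⟨b :: s, t, by simp, by simpa [hs] using fun h'' : a = b => hb h''.symm⟩

variable {G : MultiDigraph V E} {y w : V}

lemma addEdge_walk_map_inl : ∀ (p : List E) {u v : V},
    (G.addEdge y w).IsWalk u (p.map Sum.inl) v ↔ G.IsWalk u p v
  | [], u, v => Iff.rfl
  | e :: p, u, v => by
      simp only [List.map_cons, isWalk_cons]
      exact and_congr Iff.rfl (addEdge_walk_map_inl p)

lemma addEdge_walkVerts_map_inl : ∀ (p : List E) (u : V),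
    (G.addEdge y w).walkVerts u (p.map Sum.inl) = G.walkVerts u p
  | [], u => rfl
  | e :: p, u => by
      simp only [List.map_cons, walkVerts_cons]
      rw [addEdge_walkVerts_map_inl p]
      rfl

lemma all_inl {p : List (E ⊕ Unit)} (h : Sum.inr () ∉ p) :
    ∃ p' : List E, p = p'.map Sum.inl := by
  induction p with
  | nil => exact ⟨[], rfl⟩
  | cons e p ih =>
      obtain ⟨p', rfl⟩ := ih (fun hm => h (List.mem_cons_of_mem _ hm))
      cases e with
      | inl e' => exact ⟨e' :: p', rfl⟩
      | inr a => cases a; exact absurd List.mem_cons_self h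

end MultiDigraph

open MultiDigraph in
/-- There exist vertex-disjoint paths `x ⇝ y` and `w ⇝ z` in `G` iff the edge
`y → w` is irredundant in the net `(G', x, z)`, where `G'` is `G` augmented
with that edge. -/
theorem stmt16 {V E : Type} (G : MultiDigraph V E) (x y w z : V)
    (hd : [x, y, w, z].Nodup) :
    (∃ p q, G.IsWalk x p y ∧ G.IsWalk w q z ∧
      ∀ a ∈ G.walkVerts x p, a ∉ G.walkVerts w q) ↔
    (G.addEdge y w).EdgeIrredundant x z (Sum.inr ()) := by
  constructor
  · rintro ⟨p, q, hp, hq, hdisj⟩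
    obtain ⟨p', ⟨hp'w, hp'n⟩, hp'v, -⟩ := G.exists_simplePath p.length p le_rfl hp
    obtain ⟨q', ⟨hq'w, hq'n⟩, hq'v, -⟩ := G.exists_simplePath q.length q le_rfl hq
    refine ⟨p'.map Sum.inl ++ Sum.inr () :: q'.map Sum.inl, ⟨?_, ?_⟩, by simp⟩
    · rw [(G.addEdge y w).isWalk_append]
      exact ⟨y, (addEdge_walk_map_inl p').mpr hp'w,
        ⟨rfl, (addEdge_walk_map_inl q').mpr hq'w⟩⟩
    · have h1 : (G.addEdge y w).IsWalk x (p'.map Sum.inl) y :=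
        (addEdge_walk_map_inl p').mpr hp'w
      rw [(G.addEdge y w).walkVerts_append _ _ h1]
      have h2 : (G.addEdge y w).walkVerts y (Sum.inr () :: q'.map Sum.inl)
          = y :: G.walkVerts w q' := by
        rw [walkVerts_cons]
        congr 1
        exact addEdge_walkVerts_map_inl q' w
      rw [h2, addEdge_walkVerts_map_inl]
      have h3 : (G.walkVerts x p').dropLast ++ y :: G.walkVerts w q'
          = G.walkVerts x p' ++ G.walkVerts w q' := by
        conv_rhs => rw [G.walkVerts_eq hp'w]
        simp
      rw [h3, List.nodup_append]
      exact ⟨hp'n, hq'n, fun a ha b hb hab => by subst hab; exact hdisj a (hp'v a ha) (hq'v a hb)⟩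
  · rintro ⟨r, ⟨hrw, hrn⟩, hmem⟩
    obtain ⟨r₁, r₂, rfl, hnot1⟩ := first_split hmem
    rw [(G.addEdge y w).isWalk_append] at hrw
    obtain ⟨m, h1, hsrc, h3⟩ := hrw
    have hm : y = m := hsrc
    subst hm
    have h3' : (G.addEdge y w).IsWalk w r₂ z := h3
    have hV : (G.addEdge y w).walkVerts x (r₁ ++ Sum.inr () :: r₂)
        = ((G.addEdge y w).walkVerts x r₁).dropLast
            ++ y :: (G.addEdge y w).walkVerts w r₂ :=
      (G.addEdge y w).walkVerts_append r₁ _ h1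
    rw [hV, List.nodup_append] at hrn
    obtain ⟨hn1, hn2, hdisj12⟩ := hrn
    have hnot2 : Sum.inr () ∉ r₂ := by
      intro hc
      have : y ∈ (G.addEdge y w).walkVerts w r₂ :=
        (G.addEdge y w).src_mem_walkVerts r₂ h3' hc
      exact (List.nodup_cons.mp hn2).1 this
    obtain ⟨p₁, rfl⟩ := all_inl hnot1
    obtain ⟨p₂, rfl⟩ := all_inl hnot2
    refine ⟨p₁, p₂, (addEdge_walk_map_inl p₁).mp h1, (addEdge_walk_map_inl p₂).mp h3', ?_⟩
    intro a ha hb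
    simp only [addEdge_walkVerts_map_inl] at hn1 hn2 hdisj12
    have haV : a ∈ (G.walkVerts x p₁).dropLast ∨ a = y := by
      have := G.walkVerts_eq ((addEdge_walk_map_inl p₁).mp h1)
      rw [this] at ha
      simpa using ha
    rcases haV with ha' | rfl
    · exact hdisj12 a ha' a (List.mem_cons_of_mem _ hb) rfl
    · exact (List.nodup_cons.mp hn2).1 hb
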